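/- arXiv:0902.1565 — 3 statements merged into one kernel-verified Lean document; each statement's English description precedes it below -/
import Mathlib

section
/- The Kalman gain K = P₋HᵀS⁻¹ minimizes trace[(I − KH)P₋(I − KH)ᵀ + KRKᵀ] over all n×m matrices K, where S = HP₋Hᵀ + R. -/
open Matrix

lemma psd_trace_nonneg {k : ℕ} {A : Matrix (Fin k) (Fin k) ℝ} (hA : A.PosSemidef) :
    0 ≤ A.trace := by
  rw [Matrix.trace]
  apply Finset.sum_nonneg
  intro i _
  exact hA.diag_nonneg

/-- The Kalman gain `K = P₋HᵀS⁻¹` minimizes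
`trace[(I − KH)P₋(I − KH)ᵀ + KRKᵀ]` over all `n × m` matrices `K`,
where `S = HP₋Hᵀ + R`. -/
theorem kalman_gain_minimizes_trace {n m : ℕ}
    (Pm : Matrix (Fin n) (Fin n) ℝ) (H : Matrix (Fin m) (Fin n) ℝ)
    (R : Matrix (Fin m) (Fin m) ℝ)
    (hP : Pm.PosSemidef) (hR : R.PosSemidef)
    (hS : (H * Pm * Hᵀ + R).PosDef) :
    let S := H * Pm * Hᵀ + R
    let K := Pm * Hᵀ * S⁻¹
    ∀ K' : Matrix (Fin n) (Fin m) ℝ,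
      ((1 - K * H) * Pm * (1 - K * H)ᵀ + K * R * Kᵀ).trace ≤
        ((1 - K' * H) * Pm * (1 - K' * H)ᵀ + K' * R * K'ᵀ).trace := by
  intro S K K'
  have hPt : Pmᵀ = Pm := hP.1
  have hRt : Rᵀ = R := hR.1
  have hSt : Sᵀ = S := by
    show (H * Pm * Hᵀ + R)ᵀ = _
    simp [Matrix.transpose_add, Matrix.transpose_mul, hPt, hRt, ← Matrix.mul_assoc]
    rfl
  have hinv : S⁻¹ * S = 1 :=
    Matrix.nonsing_inv_mul S ((Matrix.isUnit_iff_isUnit_det S).mp hS.isUnit)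
  have hKS : K * S = Pm * Hᵀ := by
    show Pm * Hᵀ * S⁻¹ * S = _
    rw [Matrix.mul_assoc, hinv, Matrix.mul_one]
  have hSK : S * Kᵀ = H * Pm := by
    have := congrArg Matrix.transpose hKS
    simpa [Matrix.transpose_mul, hSt, hPt] using this
  have expand : ∀ L : Matrix (Fin n) (Fin m) ℝ,
      (1 - L * H) * Pm * (1 - L * H)ᵀ + L * R * Lᵀ
        = Pm - L * (H * Pm) - (Pm * Hᵀ) * Lᵀ + L * S * Lᵀ := by
    intro L
    show _ = Pm - L * (H * Pm) - (Pm * Hᵀ) * Lᵀ + L * (H * Pm * Hᵀ + R) * Lᵀ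
    simp only [Matrix.transpose_sub, Matrix.transpose_one, Matrix.transpose_mul, hPt,
      Matrix.mul_add, Matrix.add_mul, Matrix.mul_sub, Matrix.sub_mul, Matrix.mul_assoc]
    noncomm_ring
  have e1 : (K' - K) * S * (K' - K)ᵀ
      = K' * S * K'ᵀ - K * S * K'ᵀ - K' * S * Kᵀ + K * S * Kᵀ := by
    simp only [Matrix.transpose_sub, Matrix.sub_mul, Matrix.mul_sub]
    abel
  have h3 : K * S * Kᵀ = K * (H * Pm) := by rw [Matrix.mul_assoc, hSK]
  have h4 : Pm * Hᵀ * Kᵀ = K * (H * Pm) := by rw [← hKS, Matrix.mul_assoc, hSK]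
  have e2 : (K' - K) * S * (K' - K)ᵀ
      = K' * S * K'ᵀ - Pm * Hᵀ * K'ᵀ - K' * (H * Pm) + K * (H * Pm) := by
    rw [e1, hKS, Matrix.mul_assoc K' S Kᵀ, hSK, h4]
  have key : (1 - K' * H) * Pm * (1 - K' * H)ᵀ + K' * R * K'ᵀ
      = ((1 - K * H) * Pm * (1 - K * H)ᵀ + K * R * Kᵀ)
        + (K' - K) * S * (K' - K)ᵀ := by
    rw [expand K', expand K, e2, h3, h4]
    abel
  rw [key]
  have hpos : 0 ≤ ((K' - K) * S * (K' - K)ᵀ).trace := by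
    apply psd_trace_nonneg
    have := hS.posSemidef.mul_mul_conjTranspose_same (K' - K)
    simpa using this
  simp only [Matrix.trace_add]
  linarith
end

section
/- Let S be symmetric positive definite of size m×m, ν ∈ ℝ^m nonzero, A a q×n full row rank matrix. Then the block matrix M = [[2(S ⊗ I_n), ν ⊗ Aᵀ], [νᵀ ⊗ A, 0]] applied to the vector (ℓ, λ) with ℓ = ([S⁻¹ν(νᵀS⁻¹ν)⁻¹] ⊗ [Aᵀ(AAᵀ)⁻¹]) c and λ = −2[(νᵀS⁻¹ν)⁻¹ ⊗ (AAᵀ)⁻¹] c yields (0, c) for any c ∈ ℝ^q. -/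
open Matrix Kronecker

/-- Solution of the saddle point system arising from the restricted-Kalman-gain
constrained optimization problem: the block matrix
`M = [[2(S ⊗ I_n), ν ⊗ Aᵀ], [νᵀ ⊗ A, 0]]` applied to
`(ℓ, λ)` with `ℓ = ([S⁻¹ν(νᵀS⁻¹ν)⁻¹] ⊗ [Aᵀ(AAᵀ)⁻¹]) c` and
`λ = −2[(νᵀS⁻¹ν)⁻¹ ⊗ (AAᵀ)⁻¹] c` yields `(0, c)`. -/
theorem saddle_point_system_solution {m n q : ℕ}
    (S : Matrix (Fin m) (Fin m) ℝ) (ν : Fin m → ℝ) (A : Matrix (Fin q) (Fin n) ℝ)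
    (hS : S.PosDef) (hν : ν ≠ 0) (hA : A.rank = q) (c : Fin q → ℝ) :
    let M : Matrix ((Fin m × Fin n) ⊕ Fin q) ((Fin m × Fin n) ⊕ Fin q) ℝ :=
      Matrix.fromBlocks
        (2 • (S ⊗ₖ (1 : Matrix (Fin n) (Fin n) ℝ)))
        (Matrix.of fun p j => ν p.1 * Aᵀ p.2 j)
        (Matrix.of fun j p => ν p.1 * A j p.2)
        0
    let s : ℝ := ν ⬝ᵥ S⁻¹.mulVec ν
    let ℓ : Fin m × Fin n → ℝ :=
      fun p => (S⁻¹.mulVec ν p.1 * s⁻¹) * (Aᵀ * (A * Aᵀ)⁻¹).mulVec c p.2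
    let lam : Fin q → ℝ := -2 • (s⁻¹ • (A * Aᵀ)⁻¹.mulVec c)
    M.mulVec (Sum.elim ℓ lam) = Sum.elim (0 : Fin m × Fin n → ℝ) c := by
  intro M s ℓ lam
  -- `A * Aᵀ` is invertible since `A` has full row rank
  have hAAT : IsUnit (A * Aᵀ) := by
    have h : (A * Aᵀ).rank = q := by rw [rank_self_mul_transpose, hA]
    rw [← Matrix.mulVec_surjective_iff_isUnit]
    have : LinearMap.range (A * Aᵀ).mulVecLin = ⊤ := by
      apply Submodule.eq_top_of_finrank_eq
      rw [← Matrix.rank, h]; simp [Module.finrank_pi]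
    exact fun y => (LinearMap.range_eq_top.mp this) y
  have hAAT' : (A * Aᵀ) * (A * Aᵀ)⁻¹ = 1 :=
    Matrix.mul_nonsing_inv _ (Matrix.isUnit_iff_isUnit_det _ |>.mp hAAT)
  -- `s > 0` since `S⁻¹` is positive definite and `ν ≠ 0`
  have hs : 0 < s := by
    have := hS.inv.dotProduct_mulVec_pos hν
    simpa [s] using this
  have hs' : s ≠ 0 := ne_of_gt hs
  have hseq : s = ν ⬝ᵥ S⁻¹ *ᵥ ν := rfl
  have hSinv : S * S⁻¹ = 1 :=
    Matrix.mul_nonsing_inv _ (Matrix.isUnit_iff_isUnit_det _ |>.mp hS.isUnit)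
  funext x
  cases x with
  | inl p =>
    obtain ⟨i, j⟩ := p
    have hSv : ∑ k, S i k * (S⁻¹ *ᵥ ν) k = ν i := by
      have h1 : S *ᵥ (S⁻¹ *ᵥ ν) = ν := by
        rw [Matrix.mulVec_mulVec, hSinv, Matrix.one_mulVec]
      have h2 := congrFun h1 i
      simpa [Matrix.mulVec, dotProduct] using h2
    simp only [Matrix.mulVec, dotProduct, Fintype.sum_sum_type, Fintype.sum_prod_type,
      Matrix.fromBlocks_apply₁₁, Matrix.fromBlocks_apply₁₂, Sum.elim_inl, Sum.elim_inr,
      Matrix.smul_apply, Matrix.kroneckerMap_apply, Matrix.of_apply, smul_eq_mul,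
      Pi.smul_apply, M, ℓ, lam, Matrix.one_apply, mul_ite, mul_one, mul_zero, ite_mul, zero_mul,
      Finset.sum_ite_eq, Finset.mem_univ, if_true, Pi.zero_apply]
    have e1 : ∀ x : Fin m,
        ∑ x_1 : Fin n, (2 • if j = x_1 then S i x else 0) *
          ((∑ x_2 : Fin m, S⁻¹ x x_2 * ν x_2) * s⁻¹ * ∑ t : Fin q, (Aᵀ * (A * Aᵀ)⁻¹) x_1 t * c t)
        = (2 * s⁻¹ * ((Aᵀ * (A * Aᵀ)⁻¹) *ᵥ c) j) * (S i x * (S⁻¹ *ᵥ ν) x) := by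
      intro x
      rw [Finset.sum_eq_single j]
      · simp [Matrix.mulVec, dotProduct]; ring
      · intro l _ hl; simp [Ne.symm hl]
      · simp
    have e2 : ∀ x : Fin q,
        ν i * Aᵀ j x * -2 • (s⁻¹ * ∑ x_1 : Fin q, (A * Aᵀ)⁻¹ x x_1 * c x_1)
        = (-2 * s⁻¹ * ν i) * (Aᵀ j x * ((A * Aᵀ)⁻¹ *ᵥ c) x) := by
      intro x
      simp [Matrix.mulVec, dotProduct]; ring
    rw [Finset.sum_congr rfl fun x _ => e1 x, Finset.sum_congr rfl fun x _ => e2 x,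
      ← Finset.mul_sum, ← Finset.mul_sum, hSv]
    have : ∑ x : Fin q, Aᵀ j x * ((A * Aᵀ)⁻¹ *ᵥ c) x = ((Aᵀ * (A * Aᵀ)⁻¹) *ᵥ c) j := by
      rw [← Matrix.mulVec_mulVec]; rfl
    rw [this]; ring
  | inr j =>
    simp only [Matrix.mulVec, dotProduct, Fintype.sum_sum_type, Fintype.sum_prod_type,
      Matrix.fromBlocks_apply₂₁, Matrix.fromBlocks_apply₂₂, Sum.elim_inl, Sum.elim_inr,
      Matrix.of_apply, Matrix.zero_apply, zero_mul, Finset.sum_const_zero, add_zero,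
      M, ℓ, lam]
    have e1 : ∀ x : Fin m,
        ∑ x_1 : Fin n, ν x * A j x_1 *
          ((∑ x_2 : Fin m, S⁻¹ x x_2 * ν x_2) * s⁻¹ * ∑ t : Fin q, (Aᵀ * (A * Aᵀ)⁻¹) x_1 t * c t)
        = (ν x * (S⁻¹ *ᵥ ν) x) * (s⁻¹ * ∑ x_1 : Fin n, A j x_1 * ((Aᵀ * (A * Aᵀ)⁻¹) *ᵥ c) x_1) := by
      intro x
      rw [Finset.mul_sum, Finset.mul_sum]
      refine Finset.sum_congr rfl fun l _ => ?_
      simp only [Matrix.mulVec, dotProduct]; ring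
    rw [Finset.sum_congr rfl fun x _ => e1 x, ← Finset.sum_mul]
    have h2 : ∑ x : Fin m, ν x * (S⁻¹ *ᵥ ν) x = s := hseq.symm
    have h3 : ∑ x_1 : Fin n, A j x_1 * ((Aᵀ * (A * Aᵀ)⁻¹) *ᵥ c) x_1 = c j := by
      have : A *ᵥ ((Aᵀ * (A * Aᵀ)⁻¹) *ᵥ c) = c := by
        rw [Matrix.mulVec_mulVec, ← Matrix.mul_assoc, hAAT', Matrix.one_mulVec]
      exact congrFun this j
    rw [h2, h3, ← mul_assoc, mul_inv_cancel₀ hs', one_mul]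
end

section
/- The weighted least squares fusion solution equals the Kalman update: with H_F = [I; H], R_F = blockdiag(P₋, R), z_F = [x̂₋; z], and S = HP₋Hᵀ + R invertible, P₋ and R symmetric positive definite, one has ((H_F)ᵀ(R_F)⁻¹H_F)⁻¹(H_F)ᵀ(R_F)⁻¹ z_F = x̂₋ + K(z − Hx̂₋), where K = P₋HᵀS⁻¹. -/
open Matrix

/-- The weighted least squares fusion solution equals the Kalman update:
with `H_F = [I; H]`, `R_F = blockdiag(P₋, R)`, `z_F = [x̂₋; z]`,
`((H_F)ᵀ(R_F)⁻¹H_F)⁻¹(H_F)ᵀ(R_F)⁻¹ z_F = x̂₋ + K(z − Hx̂₋)` where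
`S = HP₋Hᵀ + R` and `K = P₋HᵀS⁻¹`. -/
theorem fusion_eq_kalman_update {n m : ℕ}
    (Pm : Matrix (Fin n) (Fin n) ℝ) (R : Matrix (Fin m) (Fin m) ℝ)
    (H : Matrix (Fin m) (Fin n) ℝ) (xhat : Fin n → ℝ) (z : Fin m → ℝ)
    (hP : Pm.PosDef) (hR : R.PosDef)
    (hS : IsUnit (H * Pm * Hᵀ + R).det) :
    let HF : Matrix (Fin n ⊕ Fin m) (Fin n) ℝ :=
      Matrix.fromRows (1 : Matrix (Fin n) (Fin n) ℝ) H
    let RF : Matrix (Fin n ⊕ Fin m) (Fin n ⊕ Fin m) ℝ :=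
      Matrix.fromBlocks Pm 0 0 R
    let zF : Fin n ⊕ Fin m → ℝ := Sum.elim xhat z
    let K := Pm * Hᵀ * (H * Pm * Hᵀ + R)⁻¹
    ((HFᵀ * RF⁻¹ * HF)⁻¹ * HFᵀ * RF⁻¹).mulVec zF =
      xhat + K.mulVec (z - H.mulVec xhat) := by
  intro HF RF zF K
  have hPu : IsUnit Pm.det := hP.det_pos.ne'.isUnit
  have hRu : IsUnit R.det := hR.det_pos.ne'.isUnit
  have hRFinv : RF⁻¹ = Matrix.fromBlocks Pm⁻¹ 0 0 R⁻¹ := by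
    apply inv_eq_right_inv
    simp [RF, Matrix.fromBlocks_multiply, Matrix.mul_nonsing_inv _ hPu,
      Matrix.mul_nonsing_inv _ hRu, ← Matrix.fromBlocks_one]
  set A : Matrix (Fin n) (Fin n) ℝ := Pm⁻¹ + Hᵀ * R⁻¹ * H with hAdef
  have hHRH : (Hᵀ * R⁻¹ * H).PosSemidef := by
    have := hR.inv.posSemidef.conjTranspose_mul_mul_same H
    simpa using this
  have hA : A.PosDef := hP.inv.add_posSemidef hHRH
  have hAu : IsUnit A.det := hA.det_pos.ne'.isUnit
  have hHFR : HFᵀ * RF⁻¹ = Matrix.fromCols Pm⁻¹ (Hᵀ * R⁻¹) := by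
    rw [hRFinv]
    simp [HF, Matrix.transpose_fromRows, Matrix.fromCols_mul_fromBlocks]
  have hmain : HFᵀ * RF⁻¹ * HF = A := by
    rw [hHFR]
    simp [HF, Matrix.fromCols_mul_fromRows, hAdef]
  have h1 : A * (Pm * Hᵀ) = Hᵀ * R⁻¹ * (H * Pm * Hᵀ + R) := by
    rw [hAdef, Matrix.add_mul, Matrix.mul_add,
      Matrix.nonsing_inv_mul_cancel_left _ _ hPu,
      Matrix.mul_assoc Hᵀ R⁻¹ R, Matrix.nonsing_inv_mul _ hRu, Matrix.mul_one, add_comm]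
    congr 1
    simp [Matrix.mul_assoc]
  have hAK : A * K = Hᵀ * R⁻¹ := by
    have : A * K = A * (Pm * Hᵀ) * (H * Pm * Hᵀ + R)⁻¹ := by
      simp only [K, Matrix.mul_assoc]
    rw [this, h1, Matrix.mul_nonsing_inv_cancel_right _ _ hS]
  have hK : A⁻¹ * (Hᵀ * R⁻¹) = K := by
    rw [← hAK, Matrix.nonsing_inv_mul_cancel_left _ _ hAu]
  have hIP : A⁻¹ * Pm⁻¹ = 1 - K * H := by
    have : Pm⁻¹ = A - Hᵀ * R⁻¹ * H := by rw [hAdef]; abel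
    rw [this, Matrix.mul_sub, Matrix.nonsing_inv_mul _ hAu,
      ← Matrix.mul_assoc, hK]
  rw [hmain, Matrix.mul_assoc, hHFR, Matrix.mul_fromCols,
    Matrix.fromCols_mulVec_sumElim, hIP, hK, Matrix.sub_mulVec,
    Matrix.one_mulVec, Matrix.mulVec_sub, ← Matrix.mulVec_mulVec]
  abel
end
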